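/- Let u ≥ 2 be an integer, let J be a sufficiently large integer, and let 0 = j₁ < j₂ < ⋯ < j_{2u} = J be integers. Set P(x) = ∏_{i=1}^{2u}(x + j_i) ∈ ℤ[x]. Then there exist polynomials f(x) = Σ_{i=0}^{u} a_i x^i ∈ ℚ[x] and g(x) = Σ_{i=0}^{u−1} b_i x^i ∈ ℚ[x] such that: f is monic of degree u (i.e. a_u = 1); for every 0 ≤ i ≤ u, |a_i| ≤ (u−i)^{u−i}·(uJ)^{u−i} and 4^{u−i}·a_i ∈ ℤ; for every 0 ≤ i ≤ u−1, |b_i| ≤ 5·u^{4u−2i}·J^{2u−i}; and P(x) = f(x)² + g(x) as polynomials. -/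

import Mathlib

open Polynomial Finset

lemma aux_ratio_step (t : ℕ) : (t+1)^(2*t+2) ≤ t^t * (t+2)^(t+2) := by
  rcases Nat.eq_zero_or_pos t with h | h
  · subst h; norm_num
  have hq : (0:ℚ) < (t:ℚ) + 1 := by positivity
  have hsq : (1:ℚ) ≤ ((t:ℚ)+1)^2 := by nlinarith [Nat.cast_nonneg (α := ℚ) t]
  have hb := one_add_mul_le_pow (a := -(1/((t:ℚ)+1)^2))
    (by rw [neg_le, neg_neg]; rw [div_le_iff₀ (by positivity)]; nlinarith) (t+1)
  have ht : (0:ℚ) < (t:ℚ) := by exact_mod_cast h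
  have h1 : (1:ℚ) + (↑(t+1)) * -(1/((t:ℚ)+1)^2) = (t:ℚ)/((t:ℚ)+1) := by
    push_cast; field_simp; ring
  have h2 : (1:ℚ) + -(1/((t:ℚ)+1)^2) = ((t:ℚ)*((t:ℚ)+2))/((t:ℚ)+1)^2 := by
    field_simp; ring
  rw [h1, h2, div_pow] at hb
  rw [div_le_div_iff₀ hq (by positivity)] at hb
  have key : ((t:ℚ)+1)^(2*t+2) ≤ (t:ℚ)^t * ((t:ℚ)+2)^(t+2) := by
    have e1 : (((t:ℚ)+1)^2)^(t+1) = ((t:ℚ)+1)^(2*t+2) := by rw [← pow_mul]; ring_nf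
    rw [e1, mul_pow] at hb
    have : (t:ℚ) * ((t:ℚ)+1)^(2*t+2) ≤ (t:ℚ) * ((t:ℚ)^t * ((t:ℚ)+2)^(t+2)) := by
      calc (t:ℚ) * ((t:ℚ)+1)^(2*t+2) ≤ (t:ℚ)^(t+1) * ((t:ℚ)+2)^(t+1) * ((t:ℚ)+1) := hb
        _ ≤ (t:ℚ)^(t+1) * ((t:ℚ)+2)^(t+1) * ((t:ℚ)+2) := by
            have : (0:ℚ) ≤ (t:ℚ)^(t+1) * ((t:ℚ)+2)^(t+1) := by positivity
            nlinarith
        _ = (t:ℚ) * ((t:ℚ)^t * ((t:ℚ)+2)^(t+2)) := by ring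
    exact le_of_mul_le_mul_left this ht
  exact_mod_cast key

lemma aux_ratio_mono {s t : ℕ} (hst : s ≤ t) :
    (s+1)^(s+1) * t^t ≤ s^s * (t+1)^(t+1) := by
  induction t with
  | zero => interval_cases s; norm_num
  | succ n ih =>
    rcases Nat.lt_or_ge s (n+1) with h | h
    · have h1 := ih (by omega)
      have h2 := aux_ratio_step n
      rcases Nat.eq_zero_or_pos n with hn | hn
      · subst hn; interval_cases s; norm_num
      have key : n^n * ((s+1)^(s+1) * (n+1)^(n+1)) ≤ n^n * (s^s * (n+2)^(n+2)) := by
        calc n^n * ((s+1)^(s+1) * (n+1)^(n+1))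
            = ((s+1)^(s+1) * n^n) * (n+1)^(n+1) := by ring
          _ ≤ (s^s * (n+1)^(n+1)) * (n+1)^(n+1) := Nat.mul_le_mul_right _ h1
          _ = s^s * (n+1)^(2*n+2) := by rw [mul_assoc, ← pow_add]; ring_nf
          _ ≤ s^s * (n^n * (n+2)^(n+2)) := Nat.mul_le_mul_left _ h2
          _ = n^n * (s^s * (n+2)^(n+2)) := by ring
      have := Nat.le_of_mul_le_mul_left key (Nat.pow_pos hn)
      convert this using 2 <;> omega
    · have hs : s = n+1 := by omega
      subst hs
      rw [Nat.mul_comm]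

-- endpoint maximality: for x+y = u+k with k ≤ x,y ≤ u, x^x y^y ≤ u^u k^k
lemma aux_endpoint : ∀ d x y u k : ℕ, x - k = d → x + y = u + k → k ≤ x → x ≤ u → k ≤ y → y ≤ u →
    x^x * y^y ≤ u^u * k^k := by
  intro d
  induction d using Nat.strong_induction_on with
  | _ d ih =>
    intro x y u k hd hsum hkx hxu hky hyu
    rcases Nat.eq_zero_or_pos d with h0 | h0
    · have : x = k := by omega
      have : y = u := by omega
      subst this; have : x = k := by omega
      subst this; rw [Nat.mul_comm]
    · rcases Nat.lt_or_ge y x with hlt | hle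
      · -- swap, y - k < x - k = d
        exact ih (y - k) (by omega) y x u k rfl (by omega) hky hyu hkx hxu |>.trans_eq' (by ring)
      · -- x ≤ y, move x down: x^x y^y ≤ (x-1)^(x-1) (y+1)^(y+1)
        have hx1 : 1 ≤ x := by omega
        have step : x^x * y^y ≤ (x-1)^(x-1) * (y+1)^(y+1) := by
          have := aux_ratio_mono (s := x-1) (t := y) (by omega)
          have e : x - 1 + 1 = x := by omega
          rw [e] at this
          exact this
        refine step.trans ?_
        have hyu' : y + 1 ≤ u := by omega
        exact ih (x - 1 - k) (by omega) (x-1) (y+1) u k rfl (by omega) (by omega) (by omega) (by omega) hyu'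

lemma aux_pow_succ_ge (a k : ℕ) : a^k + k * a^(k-1) ≤ (a+1)^k := by
  induction k with
  | zero => simp
  | succ n ih =>
    rcases Nat.eq_zero_or_pos n with h | h
    · subst h; simp
    obtain ⟨m, rfl⟩ : ∃ m, n = m+1 := ⟨n-1, by omega⟩
    have e : m + 1 - 1 = m := by omega
    rw [e] at ih
    calc a^(m+1+1) + (m+1+1) * a^(m+1+1-1)
        = a^(m+2) + (m+2)*a^(m+1) := by norm_num
      _ ≤ a^(m+2) + (m+2)*a^(m+1) + (m+1)*a^m := Nat.le_add_right _ _
      _ = (a^(m+1)+(m+1)*a^m)*(a+1) := by ring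
      _ ≤ (a+1)^(m+1)*(a+1) := Nat.mul_le_mul_right _ ih
      _ = (a+1)^(m+1+1) := by ring

lemma aux_bern (k d : ℕ) (hk : 1 ≤ k) : (d+1) * k^k ≤ (k+d)^k := by
  induction d with
  | zero => simp
  | succ n ih =>
    have h1 : (k+n)^k + k * (k+n)^(k-1) ≤ (k+n+1)^k := aux_pow_succ_ge (k+n) k
    have h2 : k^k ≤ k * (k+n)^(k-1) := by
      calc k^k = k * k^(k-1) := by rw [Nat.mul_comm, ← pow_succ]; congr 1; omega
        _ ≤ k * (k+n)^(k-1) := Nat.mul_le_mul_left _ (Nat.pow_le_pow_left (by omega) _)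
    calc (n+1+1) * k^k = (n+1)*k^k + k^k := by ring
      _ ≤ (k+n)^k + k * (k+n)^(k-1) := Nat.add_le_add ih h2
      _ ≤ (k+(n+1))^k := by rw [show k+(n+1) = k+n+1 by omega]; exact h1

lemma aux_fineq (u k J : ℕ) (hu : 2 ≤ u) (hk1 : 1 ≤ k) (hku : k ≤ u) :
    (2*u).choose k * J^k + (∑ i ∈ Ioo 0 k, i^i * (k-i)^(k-i)) * (u*J)^k
      ≤ 2 * (k^k * (u*J)^k) := by
  rcases Nat.eq_or_lt_of_le hk1 with h1 | h2
  · subst h1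
    have he : Ioo 0 1 = (∅ : Finset ℕ) := by decide
    simp [he, Nat.choose_one_right, mul_pow]
    ring_nf
    omega
  · have hk2 : 2 ≤ k := h2
    have hchoose : (2*u).choose k * J^k ≤ k^k * (u*J)^k := by
      calc (2*u).choose k * J^k ≤ (2*u)^k * J^k :=
            Nat.mul_le_mul_right _ (Nat.choose_le_pow _ _)
        _ = 2^k * (u^k * J^k) := by rw [mul_pow]; ring
        _ ≤ k^k * (u^k * J^k) :=
            Nat.mul_le_mul_right _ (Nat.pow_le_pow_left hk2 _)
        _ = k^k * (u*J)^k := by rw [mul_pow]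
    have hsum : (∑ i ∈ Ioo 0 k, i^i * (k-i)^(k-i)) ≤ k^k := by
      calc (∑ i ∈ Ioo 0 k, i^i * (k-i)^(k-i))
          ≤ ∑ _i ∈ Ioo 0 k, (k-1)^(k-1) * 1^1 := by
            refine Finset.sum_le_sum ?_
            intro i hi
            rw [Finset.mem_Ioo] at hi
            exact aux_endpoint (i - 1) i (k-i) (k-1) 1 rfl (by omega) (by omega) (by omega) (by omega) (by omega)
        _ = (k-1) * (k-1)^(k-1) := by
            rw [Finset.sum_const, Nat.card_Ioo]
            simp
        _ = (k-1)^k := by rw [← pow_succ']; congr 1; omega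
        _ ≤ k^k := Nat.pow_le_pow_left (by omega) _
    calc (2*u).choose k * J^k + (∑ i ∈ Ioo 0 k, i^i * (k-i)^(k-i)) * (u*J)^k
        ≤ k^k * (u*J)^k + k^k * (u*J)^k :=
          Nat.add_le_add hchoose (Nat.mul_le_mul_right _ hsum)
      _ = 2 * (k^k * (u*J)^k) := by ring

lemma aux_gineq (u i J : ℕ) (hu : 2 ≤ u) (hi : i < u) :
    (2*u).choose (2*u-i) * J^(2*u-i)
      + (∑ a ∈ range (i+1), (u-a)^(u-a) * (u-(i-a))^(u-(i-a))) * (u*J)^(2*u-i)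
      ≤ 5 * (u^(4*u-2*i) * J^(2*u-i)) := by
  have hchoose : (2*u).choose (2*u-i) * J^(2*u-i) ≤ u^(4*u-2*i) * J^(2*u-i) := by
    refine Nat.mul_le_mul_right _ ?_
    calc (2*u).choose (2*u-i) ≤ (2*u)^(2*u-i) := Nat.choose_le_pow _ _
      _ = 2^(2*u-i) * u^(2*u-i) := mul_pow _ _ _
      _ ≤ u^(2*u-i) * u^(2*u-i) :=
          Nat.mul_le_mul_right _ (Nat.pow_le_pow_left hu _)
      _ = u^(4*u-2*i) := by rw [← pow_add]; congr 1; omega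
  have hsum : (∑ a ∈ range (i+1), (u-a)^(u-a) * (u-(i-a))^(u-(i-a))) ≤ u^u * u^(u-i) := by
    calc (∑ a ∈ range (i+1), (u-a)^(u-a) * (u-(i-a))^(u-(i-a)))
        ≤ ∑ _a ∈ range (i+1), u^u * (u-i)^(u-i) := by
          refine Finset.sum_le_sum ?_
          intro a ha
          rw [Finset.mem_range] at ha
          exact aux_endpoint ((u-a)-(u-i)) (u-a) (u-(i-a)) u (u-i) rfl (by omega) (by omega) (by omega) (by omega) (by omega)
      _ = (i+1) * (u^u * (u-i)^(u-i)) := by rw [Finset.sum_const, Finset.card_range]; simp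
      _ = u^u * ((i+1) * (u-i)^(u-i)) := by ring
      _ ≤ u^u * ((u-i)+i)^(u-i) :=
          Nat.mul_le_mul_left _ (aux_bern (u-i) i (by omega))
      _ = u^u * u^(u-i) := by congr 2; omega
  have h2 : (∑ a ∈ range (i+1), (u-a)^(u-a) * (u-(i-a))^(u-(i-a))) * (u*J)^(2*u-i)
      ≤ u^(4*u-2*i) * J^(2*u-i) := by
    calc (∑ a ∈ range (i+1), (u-a)^(u-a) * (u-(i-a))^(u-(i-a))) * (u*J)^(2*u-i)
        ≤ (u^u * u^(u-i)) * (u*J)^(2*u-i) := Nat.mul_le_mul_right _ hsum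
      _ = (u^u * u^(u-i) * u^(2*u-i)) * J^(2*u-i) := by rw [mul_pow]; ring
      _ = u^(4*u-2*i) * J^(2*u-i) := by rw [← pow_add, ← pow_add]; congr 2; omega
  calc (2*u).choose (2*u-i) * J^(2*u-i)
      + (∑ a ∈ range (i+1), (u-a)^(u-a) * (u-(i-a))^(u-(i-a))) * (u*J)^(2*u-i)
      ≤ u^(4*u-2*i) * J^(2*u-i) + u^(4*u-2*i) * J^(2*u-i) := Nat.add_le_add hchoose h2
    _ ≤ 5 * (u^(4*u-2*i) * J^(2*u-i)) := by omega

section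
variable (u J : ℕ) (j : Fin (2*u) → ℕ)

lemma prodP_coeff_eq (n : ℕ) (hn : n ≤ 2*u) :
    (∏ i, (X + C ((j i : ℕ) : ℚ))).coeff n
      = ∑ t ∈ Finset.univ.powersetCard (2*u - n), ∏ i ∈ t, ((j i : ℕ) : ℚ) := by
  have hcard : (Finset.univ : Finset (Fin (2*u))).card = 2*u := by simp
  rw [Finset.prod_X_add_C_coeff _ _ (by rw [hcard]; exact hn), hcard]

lemma prodP_coeff_bound (hj : ∀ i, j i ≤ J) (n : ℕ) (hn : n ≤ 2*u) :
    |(∏ i, (X + C ((j i : ℕ) : ℚ))).coeff n|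
      ≤ (((2*u).choose (2*u - n) * J^(2*u-n) : ℕ) : ℚ) := by
  rw [prodP_coeff_eq u j n hn]
  calc |∑ t ∈ Finset.univ.powersetCard (2*u - n), ∏ i ∈ t, ((j i : ℕ) : ℚ)|
      ≤ ∑ t ∈ Finset.univ.powersetCard (2*u - n), |∏ i ∈ t, ((j i : ℕ) : ℚ)| :=
        Finset.abs_sum_le_sum_abs _ _
    _ ≤ ∑ t ∈ Finset.univ.powersetCard (2*u - n), ((J : ℚ))^(2*u-n) := by
        refine Finset.sum_le_sum ?_
        intro t ht
        rw [Finset.mem_powersetCard] at ht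
        rw [abs_of_nonneg (Finset.prod_nonneg (fun i _ => by positivity))]
        calc ∏ i ∈ t, ((j i : ℕ) : ℚ) ≤ ∏ _i ∈ t, (J : ℚ) :=
              Finset.prod_le_prod (fun i _ => by positivity)
                (fun i _ => by exact_mod_cast hj i)
          _ = (J:ℚ)^(2*u-n) := by rw [Finset.prod_const, ht.2]
    _ = (((2*u).choose (2*u - n) * J^(2*u-n) : ℕ) : ℚ) := by
        rw [Finset.sum_const, Finset.card_powersetCard]
        push_cast
        simp

lemma prodP_coeff_int (n : ℕ) :
    ∃ N : ℕ, (∏ i, (X + C ((j i : ℕ) : ℚ))).coeff n = (N : ℚ) := by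
  rcases le_or_gt n (2*u) with hn | hn
  · refine ⟨∑ t ∈ Finset.univ.powersetCard (2*u - n), ∏ i ∈ t, j i, ?_⟩
    rw [prodP_coeff_eq u j n hn]
    push_cast
    rfl
  · refine ⟨0, ?_⟩
    have hdeg : (∏ i, (X + C ((j i : ℕ) : ℚ))).natDegree = 2*u := by
      rw [Polynomial.natDegree_prod _ _ (fun i _ => Polynomial.X_add_C_ne_zero _)]
      rw [Finset.sum_congr rfl (fun (x : Fin (2*u)) _ => Polynomial.natDegree_X_add_C ((j x : ℕ) : ℚ))]
      simp
    rw [Polynomial.coeff_eq_zero_of_natDegree_lt (by omega)]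
    simp
end

noncomputable def sqc (p : Polynomial ℚ) (u : ℕ) : ℕ → ℚ
  | 0 => 1
  | (k+1) => (p.coeff (2*u - (k+1)) - ∑ i ∈ (Finset.Ioo 0 (k+1)).attach,
      sqc p u i.1 * sqc p u ((k+1) - i.1)) / 2
  termination_by k => k
  decreasing_by
    · exact (Finset.mem_Ioo.mp i.2).2
    · have := Finset.mem_Ioo.mp i.2; omega

lemma sqc_zero (p : Polynomial ℚ) (u : ℕ) : sqc p u 0 = 1 := by simp [sqc]

lemma sqc_eq (p : Polynomial ℚ) (u k : ℕ) (hk : 1 ≤ k) :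
    sqc p u k = (p.coeff (2*u - k) - ∑ i ∈ Finset.Ioo 0 k,
      sqc p u i * sqc p u (k - i)) / 2 := by
  obtain ⟨m, rfl⟩ : ∃ m, k = m+1 := ⟨k-1, by omega⟩
  rw [sqc]
  congr 2
  rw [← Finset.sum_attach (Finset.Ioo 0 (m+1)) (fun i => sqc p u i * sqc p u (m+1-i))]

lemma sqc_rec (p : Polynomial ℚ) (u k : ℕ) (hk : 1 ≤ k) :
    2 * sqc p u k + ∑ i ∈ Finset.Ioo 0 k, sqc p u i * sqc p u (k - i)
      = p.coeff (2*u - k) := by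
  rw [sqc_eq p u k hk]; ring

noncomputable def fpoly (p : Polynomial ℚ) (u : ℕ) : Polynomial ℚ :=
  ∑ n ∈ Finset.range (u+1), C (sqc p u (u-n)) * X^n

lemma fpoly_coeff (p : Polynomial ℚ) (u n : ℕ) :
    (fpoly p u).coeff n = if n ≤ u then sqc p u (u-n) else 0 := by
  rw [fpoly, Polynomial.finset_sum_coeff]
  simp only [Polynomial.coeff_C_mul, Polynomial.coeff_X_pow, mul_ite, mul_one, mul_zero]
  rw [Finset.sum_ite_eq (Finset.range (u+1)) n (fun m => sqc p u (u-m))]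
  simp only [Finset.mem_range]
  congr 1
  simp only [eq_iff_iff]
  omega

lemma fpoly_coeff_top (p : Polynomial ℚ) (u : ℕ) : (fpoly p u).coeff u = 1 := by
  rw [fpoly_coeff, if_pos (le_refl u), Nat.sub_self, sqc_zero]

lemma fpoly_natDegree_le (p : Polynomial ℚ) (u : ℕ) : (fpoly p u).natDegree ≤ u := by
  refine Polynomial.natDegree_le_iff_coeff_eq_zero.mpr ?_
  intro n hn
  rw [fpoly_coeff, if_neg (by omega)]

lemma fpoly_monic (p : Polynomial ℚ) (u : ℕ) : (fpoly p u).Monic :=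
  Polynomial.monic_of_natDegree_le_of_coeff_eq_one u (fpoly_natDegree_le p u)
    (fpoly_coeff_top p u)

lemma fpoly_natDegree (p : Polynomial ℚ) (u : ℕ) : (fpoly p u).natDegree = u := by
  refine le_antisymm (fpoly_natDegree_le p u) ?_
  refine Polynomial.le_natDegree_of_ne_zero ?_
  rw [fpoly_coeff_top]; exact one_ne_zero

lemma fpoly_sq_coeff (p : Polynomial ℚ) (u k : ℕ) (hk : k ≤ u) :
    (fpoly p u * fpoly p u).coeff (2*u - k)
      = ∑ i ∈ Finset.range (k+1), sqc p u i * sqc p u (k-i) := by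
  rw [Polynomial.coeff_mul, Finset.Nat.sum_antidiagonal_eq_sum_range_succ_mk]
  have hsub : Finset.Icc (u-k) u ⊆ Finset.range (2*u - k + 1) := by
    intro a ha; rw [Finset.mem_Icc] at ha; rw [Finset.mem_range]; omega
  rw [← Finset.sum_subset hsub ?hzero]
  · rw [Finset.sum_congr rfl (g := fun a => sqc p u (u-a) * sqc p u (k-(u-a))) ?heq]
    · refine Finset.sum_nbij' (fun a => u - a) (fun i => u - i) ?_ ?_ ?_ ?_ ?_
      · intro a ha; rw [Finset.mem_Icc] at ha; rw [Finset.mem_range]; omega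
      · intro i hi; rw [Finset.mem_range] at hi; rw [Finset.mem_Icc]; omega
      · intro a ha; rw [Finset.mem_Icc] at ha; omega
      · intro i hi; rw [Finset.mem_range] at hi; omega
      · intro a ha; rfl
    · intro a ha
      rw [Finset.mem_Icc] at ha
      rw [fpoly_coeff, fpoly_coeff, if_pos (by omega), if_pos (by omega)]
      congr 2
      omega
  · intro a ha hna
    rw [Finset.mem_range] at ha
    rw [Finset.mem_Icc] at hna
    rw [fpoly_coeff, fpoly_coeff]
    rcases Nat.lt_or_ge u a with h | h
    · rw [if_neg (by omega), zero_mul]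
    · rw [if_neg (by omega) (c := 2*u-k-a ≤ u), mul_zero]

lemma fpoly_sq_coeff_eq (p : Polynomial ℚ) (u k : ℕ) (hk : k ≤ u)
    (hp : p.coeff (2*u) = 1) :
    (fpoly p u * fpoly p u).coeff (2*u - k) = p.coeff (2*u - k) := by
  rw [fpoly_sq_coeff p u k hk]
  rcases Nat.eq_zero_or_pos k with h0 | h1
  · subst h0
    simp [sqc_zero, hp]
  · rw [Finset.sum_range_succ]
    have hins : Finset.range k = insert 0 (Finset.Ioo 0 k) := by
      ext x; simp only [Finset.mem_range, Finset.mem_insert, Finset.mem_Ioo]; omega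
    rw [hins, Finset.sum_insert (by simp)]
    rw [sqc_zero, Nat.sub_self, sqc_zero, Nat.sub_zero, one_mul, mul_one]
    have := sqc_rec p u k h1
    linarith [this]
lemma sqc_bound (p : Polynomial ℚ) (u J : ℕ) (hu : 2 ≤ u)
    (hP : ∀ n ≤ 2*u, |p.coeff n| ≤ (((2*u).choose (2*u-n) * J^(2*u-n) : ℕ) : ℚ)) :
    ∀ k ≤ u, |sqc p u k| ≤ ((k^k * (u*J)^k : ℕ) : ℚ) := by
  intro k
  induction k using Nat.strong_induction_on with
  | _ k ih =>
    intro hk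
    rcases Nat.eq_zero_or_pos k with h0 | h1
    · subst h0; simp [sqc_zero]
    rw [sqc_eq p u k h1, abs_div, abs_two, div_le_iff₀ (by norm_num)]
    have hPb : |p.coeff (2*u-k)| ≤ (((2*u).choose k * J^k : ℕ) : ℚ) := by
      have := hP (2*u-k) (by omega)
      rwa [show 2*u-(2*u-k) = k from by omega] at this
    have hSb : |∑ i ∈ Ioo 0 k, sqc p u i * sqc p u (k-i)|
        ≤ (((∑ i ∈ Ioo 0 k, i^i*(k-i)^(k-i)) * (u*J)^k : ℕ) : ℚ) := by
      calc |∑ i ∈ Ioo 0 k, sqc p u i * sqc p u (k-i)|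
          ≤ ∑ i ∈ Ioo 0 k, |sqc p u i * sqc p u (k-i)| := Finset.abs_sum_le_sum_abs _ _
        _ ≤ ∑ i ∈ Ioo 0 k, ((i^i*(k-i)^(k-i)*(u*J)^k : ℕ) : ℚ) := by
            refine Finset.sum_le_sum ?_
            intro i hi
            rw [Finset.mem_Ioo] at hi
            rw [abs_mul]
            calc |sqc p u i| * |sqc p u (k-i)|
                ≤ ((i^i * (u*J)^i : ℕ) : ℚ) * (((k-i)^(k-i) * (u*J)^(k-i) : ℕ) : ℚ) :=
                  mul_le_mul (ih i (by omega) (by omega)) (ih (k-i) (by omega) (by omega))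
                    (abs_nonneg _) (by positivity)
              _ = ((i^i*(k-i)^(k-i)*(u*J)^k : ℕ) : ℚ) := by
                  push_cast
                  rw [mul_mul_mul_comm, ← pow_add, show i+(k-i) = k from by omega]
        _ = (((∑ i ∈ Ioo 0 k, i^i*(k-i)^(k-i)) * (u*J)^k : ℕ) : ℚ) := by
            rw [Finset.sum_mul]
            push_cast
            rfl
    calc |p.coeff (2*u-k) - ∑ i ∈ Ioo 0 k, sqc p u i * sqc p u (k-i)|
        ≤ |p.coeff (2*u-k)| + |∑ i ∈ Ioo 0 k, sqc p u i * sqc p u (k-i)| := by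
          rw [sub_eq_add_neg]
          exact (abs_add_le _ _).trans (by rw [abs_neg])
      _ ≤ (((2*u).choose k * J^k : ℕ) : ℚ)
            + (((∑ i ∈ Ioo 0 k, i^i*(k-i)^(k-i)) * (u*J)^k : ℕ) : ℚ) := add_le_add hPb hSb
      _ = (((2*u).choose k * J^k + (∑ i ∈ Ioo 0 k, i^i*(k-i)^(k-i)) * (u*J)^k : ℕ) : ℚ) := by
          push_cast; ring
      _ ≤ ((2 * (k^k * (u*J)^k) : ℕ) : ℚ) := by
          exact_mod_cast aux_fineq u k J hu h1 hk
      _ = ((k^k*(u*J)^k : ℕ) : ℚ) * 2 := by push_cast; ring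

lemma sqc_int (p : Polynomial ℚ) (u : ℕ)
    (hP : ∀ n, ∃ N : ℕ, p.coeff n = (N:ℚ)) :
    ∀ k, 1 ≤ k → ∃ m : ℤ, (2:ℚ)^(2*k-1) * sqc p u k = m := by
  have key : ∀ k, 1 ≤ k → (2:ℚ)^(2*k-1) * sqc p u k ∈ (Int.castRingHom ℚ).range := by
    intro k
    induction k using Nat.strong_induction_on with
    | _ k ih =>
      intro h1
      have e1 : (2:ℚ)^(2*k-1) = 2^(2*k-2) * 2 := by
        rw [← pow_succ]; congr 1; omega
      rw [sqc_eq p u k h1, e1]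
      have e4 : (2:ℚ)^(2*k-2) * 2 * ((p.coeff (2*u - k) - ∑ i ∈ Finset.Ioo 0 k, sqc p u i * sqc p u (k - i)) / 2)
          = 2^(2*k-2) * (p.coeff (2*u - k) - ∑ i ∈ Finset.Ioo 0 k, sqc p u i * sqc p u (k - i)) := by
        ring
      rw [e4, mul_sub]
      refine sub_mem ?_ ?_
      · obtain ⟨N, hN⟩ := hP (2*u-k)
        rw [hN]
        exact ⟨2^(2*k-2) * N, by simp only [Int.coe_castRingHom]; push_cast; ring⟩
      · rw [Finset.mul_sum]
        refine Subring.sum_mem _ ?_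
        intro i hi
        rw [Finset.mem_Ioo] at hi
        have e2 : (2:ℚ)^(2*k-2) = 2^(2*i-1) * 2^(2*(k-i)-1) := by
          rw [← pow_add]; congr 1; omega
        have e3 : (2:ℚ)^(2*k-2) * (sqc p u i * sqc p u (k-i))
            = ((2:ℚ)^(2*i-1) * sqc p u i) * ((2:ℚ)^(2*(k-i)-1) * sqc p u (k-i)) := by
          rw [e2]; ring
        rw [e3]
        exact mul_mem (ih i (by omega) (by omega)) (ih (k-i) (by omega) (by omega))
  intro k hk
  obtain ⟨m, hm⟩ := key k hk
  exact ⟨m, hm.symm⟩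

lemma prodP_natDegree (u : ℕ) (j : Fin (2*u) → ℕ) :
    (∏ i, (X + C ((j i : ℕ) : ℚ))).natDegree = 2*u := by
  rw [Polynomial.natDegree_prod _ _ (fun i _ => Polynomial.X_add_C_ne_zero _)]
  rw [Finset.sum_congr rfl (fun (x : Fin (2*u)) _ => Polynomial.natDegree_X_add_C ((j x : ℕ) : ℚ))]
  simp

theorem stmt_18 (u : ℕ) (hu : 2 ≤ u) :
    ∃ J₀ : ℕ, ∀ J : ℕ, J₀ ≤ J →
      ∀ j : Fin (2 * u) → ℕ, StrictMono j →
        j ⟨0, by omega⟩ = 0 → j ⟨2 * u - 1, by omega⟩ = J →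
        ∃ f g : Polynomial ℚ,
          f.Monic ∧ f.natDegree = u ∧ g.degree < (u : WithBot ℕ) ∧
          (∀ i ≤ u,
            |f.coeff i| ≤ (((u - i) ^ (u - i) * (u * J) ^ (u - i) : ℕ) : ℚ) ∧
            ∃ m : ℤ, (4 : ℚ) ^ (u - i) * f.coeff i = (m : ℚ)) ∧
          (∀ i < u,
            |g.coeff i| ≤ ((5 * u ^ (4 * u - 2 * i) * J ^ (2 * u - i) : ℕ) : ℚ)) ∧
          (∏ i, (X + C ((j i : ℚ)))) = f ^ 2 + g := by
  refine ⟨0, ?_⟩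
  intro J _ j hmono h0 hJ
  set p : Polynomial ℚ := ∏ i, (X + C ((j i : ℕ) : ℚ)) with hp
  have hjle : ∀ i, j i ≤ J := by
    intro i
    rw [← hJ]
    refine hmono.monotone ?_
    rw [Fin.le_def]
    have := i.isLt
    simp only []
    omega
  have hPbound := prodP_coeff_bound u J j hjle
  have hPint := prodP_coeff_int u j
  have hpmonic : p.Monic := monic_prod_of_monic _ _ (fun i _ => monic_X_add_C _)
  have hpdeg : p.natDegree = 2*u := prodP_natDegree u j
  have hptop : p.coeff (2*u) = 1 := by
    have := hpmonic.coeff_natDegree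
    rwa [hpdeg] at this
  refine ⟨fpoly p u, p - (fpoly p u)^2, fpoly_monic p u, fpoly_natDegree p u, ?_, ?_, ?_, by ring⟩
  · -- degree (p - f^2) < u
    rw [Polynomial.degree_lt_iff_coeff_zero]
    intro m hm
    rw [Polynomial.coeff_sub, pow_two]
    rcases le_or_gt m (2*u) with h2 | h2
    · have := fpoly_sq_coeff_eq p u (2*u - m) (by omega) hptop
      rw [show 2*u - (2*u - m) = m from by omega] at this
      rw [this, sub_self]
    · rw [Polynomial.coeff_eq_zero_of_natDegree_lt (by omega),
        Polynomial.coeff_eq_zero_of_natDegree_lt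
          (lt_of_le_of_lt (Polynomial.natDegree_mul_le)
            (by rw [fpoly_natDegree]; omega)), sub_self]
  · -- f coefficient bounds and integrality
    intro i hi
    have hcoe : (fpoly p u).coeff i = sqc p u (u - i) := by
      rw [fpoly_coeff, if_pos hi]
    constructor
    · rw [hcoe]
      exact sqc_bound p u J hu hPbound (u-i) (by omega)
    · rcases Nat.eq_zero_or_pos (u - i) with h0' | h1'
      · refine ⟨1, ?_⟩
        rw [hcoe, h0', pow_zero, one_mul, sqc_zero]
        norm_num
      · obtain ⟨m, hm⟩ := sqc_int p u hPint (u-i) h1'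
        refine ⟨2*m, ?_⟩
        have e : (4 : ℚ)^(u-i) = 2 * 2^(2*(u-i)-1) := by
          calc (4:ℚ)^(u-i) = 2^(2*(u-i)) := by
                rw [show (4:ℚ) = 2^2 from by norm_num, ← pow_mul]
            _ = 2^(1 + (2*(u-i)-1)) := by congr 1; omega
            _ = 2 * 2^(2*(u-i)-1) := by rw [pow_add, pow_one]
        rw [hcoe, e, mul_assoc, hm]
        push_cast
        ring
  · -- g coefficient bounds
    intro i hi
    rw [Polynomial.coeff_sub, pow_two]
    have hfsq : (fpoly p u * fpoly p u).coeff i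
        = ∑ a ∈ Finset.range (i+1), sqc p u (u-a) * sqc p u (u-(i-a)) := by
      rw [Polynomial.coeff_mul, Finset.Nat.sum_antidiagonal_eq_sum_range_succ_mk]
      refine Finset.sum_congr rfl ?_
      intro a ha
      rw [Finset.mem_range] at ha
      rw [fpoly_coeff, fpoly_coeff, if_pos (by omega), if_pos (by omega)]
    rw [hfsq]
    have hPb : |p.coeff i| ≤ (((2*u).choose (2*u-i) * J^(2*u-i) : ℕ) : ℚ) :=
      hPbound i (by omega)
    have hSb : |∑ a ∈ Finset.range (i+1), sqc p u (u-a) * sqc p u (u-(i-a))|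
        ≤ (((∑ a ∈ Finset.range (i+1), (u-a)^(u-a) * (u-(i-a))^(u-(i-a))) * (u*J)^(2*u-i) : ℕ) : ℚ) := by
      calc |∑ a ∈ Finset.range (i+1), sqc p u (u-a) * sqc p u (u-(i-a))|
          ≤ ∑ a ∈ Finset.range (i+1), |sqc p u (u-a) * sqc p u (u-(i-a))| :=
            Finset.abs_sum_le_sum_abs _ _
        _ ≤ ∑ a ∈ Finset.range (i+1), (((u-a)^(u-a) * (u-(i-a))^(u-(i-a)) * (u*J)^(2*u-i) : ℕ) : ℚ) := by
            refine Finset.sum_le_sum ?_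
            intro a ha
            rw [Finset.mem_range] at ha
            rw [abs_mul]
            calc |sqc p u (u-a)| * |sqc p u (u-(i-a))|
                ≤ (((u-a)^(u-a) * (u*J)^(u-a) : ℕ) : ℚ)
                    * (((u-(i-a))^(u-(i-a)) * (u*J)^(u-(i-a)) : ℕ) : ℚ) :=
                  mul_le_mul (sqc_bound p u J hu hPbound (u-a) (by omega))
                    (sqc_bound p u J hu hPbound (u-(i-a)) (by omega))
                    (abs_nonneg _) (by positivity)
              _ = (((u-a)^(u-a) * (u-(i-a))^(u-(i-a)) * (u*J)^(2*u-i) : ℕ) : ℚ) := by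
                  push_cast
                  rw [mul_mul_mul_comm, ← pow_add,
                    show (u-a)+(u-(i-a)) = 2*u-i from by omega]
        _ = (((∑ a ∈ Finset.range (i+1), (u-a)^(u-a) * (u-(i-a))^(u-(i-a))) * (u*J)^(2*u-i) : ℕ) : ℚ) := by
            rw [Finset.sum_mul]
            push_cast
            rfl
    calc |p.coeff i - ∑ a ∈ Finset.range (i+1), sqc p u (u-a) * sqc p u (u-(i-a))|
        ≤ |p.coeff i| + |∑ a ∈ Finset.range (i+1), sqc p u (u-a) * sqc p u (u-(i-a))| := by
          rw [sub_eq_add_neg]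
          exact (abs_add_le _ _).trans (by rw [abs_neg])
      _ ≤ (((2*u).choose (2*u-i) * J^(2*u-i) : ℕ) : ℚ)
            + (((∑ a ∈ Finset.range (i+1), (u-a)^(u-a) * (u-(i-a))^(u-(i-a))) * (u*J)^(2*u-i) : ℕ) : ℚ) :=
          add_le_add hPb hSb
      _ = (((2*u).choose (2*u-i) * J^(2*u-i)
            + (∑ a ∈ Finset.range (i+1), (u-a)^(u-a) * (u-(i-a))^(u-(i-a))) * (u*J)^(2*u-i) : ℕ) : ℚ) := by
          push_cast; ring
      _ ≤ ((5 * (u^(4*u-2*i) * J^(2*u-i)) : ℕ) : ℚ) := by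
          exact_mod_cast aux_gineq u i J hu hi
      _ = ((5 * u ^ (4 * u - 2 * i) * J ^ (2 * u - i) : ℕ) : ℚ) := by
          push_cast; ring
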